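/- Let S_N(t) = ⟨Ω| e^{iHt} σ^x_1 e^{−iHt} |Ω⟩, where |Ω⟩ = 2^{−N/2}(1,1)ᵀ^{⊗N} is the all-x-polarized state and H the periodic XX Hamiltonian on N sites. Then for any commensurate Q, ⟨σ^x_n(t)⟩_Q = S_N(t cos Q) cos(Qn) and ⟨σ^y_n(t)⟩_Q = S_N(t cos Q) sin(Qn). -/

import Mathlib

noncomputable section
open Matrix Complex BigOperators Finset

/-- Pauli x matrix. -/
def pX : Matrix (Fin 2) (Fin 2) ℂ := !![0, 1; 1, 0]
/-- Pauli y matrix. -/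
def pY : Matrix (Fin 2) (Fin 2) ℂ := !![0, -Complex.I; Complex.I, 0]
/-- Pauli z matrix. -/
def pZ : Matrix (Fin 2) (Fin 2) ℂ := !![1, 0; 0, -1]
/-- Spin raising operator `σ⁺ = (σ^x + iσ^y)/2`. -/
def sPlus : Matrix (Fin 2) (Fin 2) ℂ := !![0, 1; 0, 0]
/-- Spin lowering operator `σ⁻ = (σ^x − iσ^y)/2`. -/
def sMinus : Matrix (Fin 2) (Fin 2) ℂ := !![0, 0; 1, 0]

/-- The operator acting as `A` on the `n`-th qubit (0-based) and as identity elsewhere. -/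
def site (N : ℕ) (A : Matrix (Fin 2) (Fin 2) ℂ) (n : Fin N) :
    Matrix (Fin N → Fin 2) (Fin N → Fin 2) ℂ :=
  Matrix.of fun s t => ∏ j : Fin N, if j = n then A (s j) (t j) else if s j = t j then 1 else 0

/-- The periodic XX Hamiltonian `H = Σ_n (σ^x_n σ^x_{n+1} + σ^y_n σ^y_{n+1})`. -/
def Hxx (N : ℕ) [NeZero N] : Matrix (Fin N → Fin 2) (Fin N → Fin 2) ℂ :=
  ∑ n : Fin N, (site N pX n * site N pX (n + 1) + site N pY n * site N pY (n + 1))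

/-- The time-evolution operator `e^{iHt}` of the XX model. -/
def Ut (N : ℕ) [NeZero N] (t : ℝ) : Matrix (Fin N → Fin 2) (Fin N → Fin 2) ℂ :=
  NormedSpace.exp ((Complex.I * (t : ℂ)) • Hxx N)

/-- Quantum-mechanical expectation value `⟨ψ| A |ψ⟩`. -/
def expval (N : ℕ) (ψ : (Fin N → Fin 2) → ℂ)
    (A : Matrix (Fin N → Fin 2) (Fin N → Fin 2) ℂ) : ℂ :=
  dotProduct (star ψ) (A.mulVec ψ)

/-- The transverse spin-helix state `|Ψ_Q⟩ = 2^{−N/2} ⊗_{n=1}^{N} (1, e^{inQ})ᵀ`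
(0-based site `j` corresponds to `n = j+1`). -/
def helix (N : ℕ) (Q : ℝ) : (Fin N → Fin 2) → ℂ := fun s =>
  ∏ j : Fin N, ((Real.sqrt 2 : ℂ))⁻¹ *
    (if s j = 0 then 1 else Complex.exp (Complex.I * Q * ((j : ℕ) + 1)))

/-- `S_N(t) = ⟨Ω| e^{iHt} σ^x_1 e^{−iHt} |Ω⟩` where `|Ω⟩ = 2^{−N/2}(1,1)ᵀ^{⊗N}` is the
all-x-polarized state (`|Ω⟩ = |Ψ_0⟩` is the helix with `Q = 0`). -/
def SN (N : ℕ) [NeZero N] (t : ℝ) : ℂ :=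
  expval N (helix N 0) (Ut N t * site N pX 0 * Ut N (-t))

namespace HelixAux

abbrev M2 := Matrix (Fin 2) (Fin 2) ℂ
abbrev Sp (N : ℕ) := Fin N → Fin 2
abbrev MN (N : ℕ) := Matrix (Sp N) (Sp N) ℂ

variable {N : ℕ}

def tens (F : Fin N → M2) : MN N := Matrix.of fun s t => ∏ j, F j (s j) (t j)

lemma tens_apply (F : Fin N → M2) (s t : Sp N) : tens F s t = ∏ j, F j (s j) (t j) := rfl

lemma tens_mul (F G : Fin N → M2) : tens F * tens G = tens (F * G) := by
  ext s t
  simp only [Matrix.mul_apply, tens_apply, Pi.mul_apply]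
  simp_rw [← Finset.prod_mul_distrib]
  exact (Fintype.prod_sum fun j x => F j (s j) x * G j x (t j)).symm

lemma tens_one : tens (fun _ => (1 : M2)) = (1 : MN N) := by
  ext s t
  simp only [tens_apply, Matrix.one_apply]
  by_cases h : s = t
  · subst h; simp
  · obtain ⟨j, hj⟩ := Function.ne_iff.mp h
    rw [if_neg h]
    exact Finset.prod_eq_zero (Finset.mem_univ j) (by simp [hj])

lemma tens_diagonal (p : Fin N → Fin 2 → ℂ) :
    tens (fun j => Matrix.diagonal (p j)) = Matrix.diagonal (fun s => ∏ j, p j (s j)) := by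
  ext s t
  simp only [tens_apply, Matrix.diagonal_apply]
  by_cases h : s = t
  · subst h; simp
  · obtain ⟨j, hj⟩ := Function.ne_iff.mp h
    rw [if_neg h]
    exact Finset.prod_eq_zero (Finset.mem_univ j) (by simp [hj])

lemma site_eq_tens (A : M2) (n : Fin N) :
    site N A n = tens (fun j => if j = n then A else 1) := by
  ext s t
  simp only [site, tens_apply, Matrix.of_apply]
  refine Finset.prod_congr rfl fun j _ => ?_
  by_cases h : j = n <;> simp [h, Matrix.one_apply]

lemma site_mul_same (A B : M2) (n : Fin N) : site N A n * site N B n = site N (A * B) n := by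
  rw [site_eq_tens, site_eq_tens, tens_mul, site_eq_tens]
  have : ((fun j => if j = n then A else 1) * fun j => if j = n then B else 1)
      = (fun j => if j = n then A * B else (1:M2)) := by
    funext j; by_cases h : j = n <;> simp [h]
  rw [this]

lemma tens_comm (F G : Fin N → M2) (h : ∀ j, Commute (F j) (G j)) :
    Commute (tens F) (tens G) := by
  unfold Commute SemiconjBy
  rw [tens_mul, tens_mul]
  have : F * G = G * F := funext fun j => (h j).eq
  rw [this]

lemma site_comm {n m : Fin N} (hnm : n ≠ m) (A B : M2) :
    Commute (site N A n) (site N B m) := by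
  rw [site_eq_tens, site_eq_tens]
  refine tens_comm _ _ fun j => ?_
  by_cases h1 : j = n
  · rw [if_pos h1, if_neg (h1 ▸ hnm)]; exact Commute.one_right A
  · rw [if_neg h1]; exact Commute.one_left _

lemma site_apply' (A : M2) (n : Fin N) (s t : Sp N) :
    site N A n s t
      = A (s n) (t n) * ∏ j ∈ Finset.univ.erase n, (if s j = t j then (1:ℂ) else 0) := by
  simp only [site, Matrix.of_apply]
  rw [← Finset.mul_prod_erase Finset.univ _ (Finset.mem_univ n), if_pos rfl]
  congr 1
  exact Finset.prod_congr rfl fun j hj => if_neg (Finset.mem_erase.mp hj).1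

lemma site_smul (c : ℂ) (A : M2) (n : Fin N) : site N (c • A) n = c • site N A n := by
  ext s t
  simp only [site_apply', Matrix.smul_apply, smul_eq_mul]
  ring

lemma site_add (A B : M2) (n : Fin N) : site N (A + B) n = site N A n + site N B n := by
  ext s t
  simp only [site_apply', Matrix.add_apply]
  ring

lemma site_sub (A B : M2) (n : Fin N) : site N (A - B) n = site N A n - site N B n := by
  ext s t
  simp only [site_apply', Matrix.sub_apply]
  ring

lemma site_zero (n : Fin N) : site N (0 : M2) n = 0 := by
  ext s t
  simp [site_apply']

lemma site_one (n : Fin N) : site N (1 : M2) n = 1 := by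
  rw [site_eq_tens, ← tens_one]
  have : (fun j => if j = n then (1:M2) else 1) = (fun _ : Fin N => (1:M2)) := by
    funext j; by_cases h : j = n <;> simp [h]
  rw [this]

lemma site_transpose (A : M2) (n : Fin N) : (site N A n)ᵀ = site N Aᵀ n := by
  ext s t
  simp only [Matrix.transpose_apply, site, Matrix.of_apply]
  refine Finset.prod_congr rfl fun j _ => ?_
  by_cases h : j = n
  · simp [h]
  · simp only [if_neg h]
    by_cases h2 : s j = t j <;> simp [h2, Ne.symm, eq_comm]

end HelixAux
namespace HelixAux

variable {N : ℕ}

-- 2x2 facts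
lemma pX_decomp : pX = sPlus + sMinus := by
  ext i j; fin_cases i <;> fin_cases j <;> simp [pX, sPlus, sMinus]

lemma pY_decomp : pY = Complex.I • sMinus - Complex.I • sPlus := by
  ext i j; fin_cases i <;> fin_cases j <;> simp [pY, sPlus, sMinus]

lemma sPlus_sPlus : sPlus * sPlus = 0 := by
  ext i j; fin_cases i <;> fin_cases j <;>
    simp [sPlus, Matrix.mul_apply, Fin.sum_univ_two]

lemma sMinus_sMinus : sMinus * sMinus = 0 := by
  ext i j; fin_cases i <;> fin_cases j <;>
    simp [sMinus, Matrix.mul_apply, Fin.sum_univ_two]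

lemma sPlus_sMinus : sPlus * sMinus = (1/2 : ℂ) • (1 + pZ) := by
  ext i j; fin_cases i <;> fin_cases j <;>
    simp [sPlus, sMinus, pZ, Matrix.mul_apply, Fin.sum_univ_two, Matrix.one_apply] <;> norm_num

lemma sMinus_sPlus : sMinus * sPlus = (1/2 : ℂ) • (1 - pZ) := by
  ext i j; fin_cases i <;> fin_cases j <;>
    simp [sPlus, sMinus, pZ, Matrix.mul_apply, Fin.sum_univ_two, Matrix.one_apply] <;> norm_num

lemma pX_transpose : pXᵀ = pX := by
  ext i j; fin_cases i <;> fin_cases j <;> simp [pX]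

lemma pY_transpose : pYᵀ = -pY := by
  ext i j; fin_cases i <;> fin_cases j <;> simp [pY]

-- small Fin facts
lemma one_lt_of_ne {n m : Fin N} (h : n ≠ m) : 1 < N := by
  rcases Nat.lt_or_ge N 2 with h2 | h2
  · exfalso; apply h
    have hn := n.isLt; have hm := m.isLt
    exact Fin.ext (by omega)
  · omega

lemma add_one_ne [NeZero N] (hN : 1 < N) (n : Fin N) : n + 1 ≠ n := by
  intro h
  have h1 : (1 : Fin N) = 0 := by rwa [add_eq_left] at h
  have h2 : 1 % N = 0 := by
    have h4 := congrArg Fin.val h1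
    rwa [Fin.val_one', show ((0 : Fin N) : ℕ) = 0 from rfl] at h4
  rw [Nat.mod_eq_of_lt hN] at h2
  exact one_ne_zero h2

section Ham
variable (N) [NeZero N]

def sp (n : Fin N) : MN N := site N sPlus n
def sm (n : Fin N) : MN N := site N sMinus n
def hp (n : Fin N) : MN N := sp N n * sm N (n + 1)
def hm (n : Fin N) : MN N := sm N n * sp N (n + 1)
def Hp : MN N := ∑ n, hp N n
def Hm : MN N := ∑ n, hm N n
def Jc : MN N := ∑ n, (site N pX n * site N pY (n + 1) - site N pY n * site N pX (n + 1))

variable {N}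

lemma sp_sp_zero (n : Fin N) : sp N n * sp N n = 0 := by
  rw [sp, site_mul_same, sPlus_sPlus, site_zero]

lemma sm_sm_zero (n : Fin N) : sm N n * sm N n = 0 := by
  rw [sm, site_mul_same, sMinus_sMinus, site_zero]

lemma half_diff (a b : MN N) :
    (1/2:ℂ) • (1 + a) * ((1/2:ℂ) • (1 - b)) - (1/2:ℂ) • (1 - a) * ((1/2:ℂ) • (1 + b))
      = (1/2:ℂ) • (a - b) := by
  rw [smul_mul_assoc, smul_mul_assoc, mul_smul_comm, mul_smul_comm, smul_smul, smul_smul,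
    ← smul_sub]
  have h : (1 + a) * (1 - b) - (1 - a) * (1 + b) = (a - b) + (a - b) := by noncomm_ring
  rw [h, smul_add, ← add_smul]
  norm_num

lemma hp_hm_same (n : Fin N) :
    hp N n * hm N n - hm N n * hp N n
      = (1/2 : ℂ) • (site N pZ n - site N pZ (n + 1)) := by
  by_cases hb : n + 1 = n
  · have z1 : (sPlus * sMinus) * (sMinus * sPlus) = 0 := by
      rw [mul_assoc, ← mul_assoc sMinus, sMinus_sMinus, zero_mul, mul_zero]
    have z2 : (sMinus * sPlus) * (sPlus * sMinus) = 0 := by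
      rw [mul_assoc, ← mul_assoc sPlus, sPlus_sPlus, zero_mul, mul_zero]
    rw [hp, hm, hb]
    simp only [sp, sm]
    rw [site_mul_same, site_mul_same, site_mul_same, site_mul_same, z1, z2, site_zero]
    simp
  · have c1 : sm N (n+1) * sm N n = sm N n * sm N (n+1) := (site_comm hb _ _).eq
    have c2 : sp N (n+1) * sp N n = sp N n * sp N (n+1) := (site_comm hb _ _).eq
    have e1 : hp N n * hm N n
        = site N (sPlus * sMinus) n * site N (sMinus * sPlus) (n+1) := by
      rw [hp, hm]
      calc sp N n * sm N (n+1) * (sm N n * sp N (n+1))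
          = sp N n * (sm N (n+1) * sm N n) * sp N (n+1) := by noncomm_ring
        _ = sp N n * (sm N n * sm N (n+1)) * sp N (n+1) := by rw [c1]
        _ = (sp N n * sm N n) * (sm N (n+1) * sp N (n+1)) := by noncomm_ring
        _ = site N (sPlus * sMinus) n * site N (sMinus * sPlus) (n+1) := by
            simp only [sp, sm]; rw [site_mul_same, site_mul_same]
    have e2 : hm N n * hp N n
        = site N (sMinus * sPlus) n * site N (sPlus * sMinus) (n+1) := by
      rw [hp, hm]
      calc sm N n * sp N (n+1) * (sp N n * sm N (n+1))
          = sm N n * (sp N (n+1) * sp N n) * sm N (n+1) := by noncomm_ring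
        _ = sm N n * (sp N n * sp N (n+1)) * sm N (n+1) := by rw [c2]
        _ = (sm N n * sp N n) * (sp N (n+1) * sm N (n+1)) := by noncomm_ring
        _ = site N (sMinus * sPlus) n * site N (sPlus * sMinus) (n+1) := by
            simp only [sp, sm]; rw [site_mul_same, site_mul_same]
    rw [e1, e2, sPlus_sMinus, sMinus_sPlus, site_smul, site_smul, site_smul, site_smul,
      site_add, site_add, site_sub, site_sub, site_one, site_one, half_diff]

lemma hp_hm_ne {n m : Fin N} (hne : n ≠ m) : Commute (hp N n) (hm N m) := by
  have hN := one_lt_of_ne hne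
  by_cases h1 : m + 1 = n
  · by_cases h2 : n + 1 = m
    · have hL : hp N n * hm N m = 0 := by
        rw [hp, hm, h1, h2]
        calc sp N n * sm N m * (sm N m * sp N n)
            = sp N n * (sm N m * sm N m) * sp N n := by noncomm_ring
          _ = 0 := by rw [sm_sm_zero, mul_zero, zero_mul]
      have hR : hm N m * hp N n = 0 := by
        rw [hp, hm, h1, h2]
        calc sm N m * sp N n * (sp N n * sm N m)
            = sm N m * (sp N n * sp N n) * sm N m := by noncomm_ring
          _ = 0 := by rw [sp_sp_zero, mul_zero, zero_mul]
      unfold Commute SemiconjBy; rw [hL, hR]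
    · have cA : sp N n * sm N m = sm N m * sp N n := (site_comm hne _ _).eq
      have cB : sm N (n+1) * sp N n = sp N n * sm N (n+1) :=
        (site_comm (add_one_ne hN n) _ _).eq
      have hL : hp N n * hm N m = 0 := by
        rw [hp, hm, h1]
        calc sp N n * sm N (n+1) * (sm N m * sp N n)
            = sp N n * sm N (n+1) * (sp N n * sm N m) := by rw [← cA]
          _ = sp N n * (sm N (n+1) * sp N n) * sm N m := by noncomm_ring
          _ = sp N n * (sp N n * sm N (n+1)) * sm N m := by rw [cB]
          _ = (sp N n * sp N n) * (sm N (n+1) * sm N m) := by noncomm_ring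
          _ = 0 := by rw [sp_sp_zero, zero_mul]
      have hR : hm N m * hp N n = 0 := by
        rw [hp, hm, h1]
        calc sm N m * sp N n * (sp N n * sm N (n+1))
            = sm N m * (sp N n * sp N n) * sm N (n+1) := by noncomm_ring
          _ = 0 := by rw [sp_sp_zero, mul_zero, zero_mul]
      unfold Commute SemiconjBy; rw [hL, hR]
  · by_cases h2 : n + 1 = m
    · have hL : hp N n * hm N m = 0 := by
        rw [hp, hm, h2]
        calc sp N n * sm N m * (sm N m * sp N (m+1))
            = sp N n * (sm N m * sm N m) * sp N (m+1) := by noncomm_ring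
          _ = 0 := by rw [sm_sm_zero, mul_zero, zero_mul]
      have hR : hm N m * hp N n = 0 := by
        rw [hp, hm, h2]
        calc sm N m * sp N (m+1) * (sp N n * sm N m)
            = sm N m * sp N (m+1) * (sm N m * sp N n) := by
              have cH : sp N n * sm N m = sm N m * sp N n := (site_comm hne _ _).eq
              rw [cH]
          _ = sm N m * (sp N (m+1) * sm N m) * sp N n := by noncomm_ring
          _ = sm N m * (sm N m * sp N (m+1)) * sp N n := by
              have cI : sp N (m+1) * sm N m = sm N m * sp N (m+1) :=
                (site_comm (add_one_ne hN m) _ _).eq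
              rw [cI]
          _ = (sm N m * sm N m) * (sp N (m+1) * sp N n) := by noncomm_ring
          _ = 0 := by rw [sm_sm_zero, zero_mul]
      unfold Commute SemiconjBy; rw [hL, hR]
    · have h13 : n ≠ m + 1 := fun e => h1 e.symm
      have h24 : n + 1 ≠ m + 1 := fun e => hne (add_right_cancel e)
      have ca : Commute (sp N n) (sm N m * sp N (m+1)) :=
        (site_comm hne _ _).mul_right (site_comm h13 _ _)
      have cb : Commute (sm N (n+1)) (sm N m * sp N (m+1)) :=
        (site_comm h2 _ _).mul_right (site_comm h24 _ _)
      exact (ca.mul_left cb : _)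

end Ham
end HelixAux
namespace HelixAux

variable {N : ℕ} [NeZero N]

lemma sum_shift {α : Type*} [AddCommMonoid α] (g : Fin N → α) :
    ∑ n : Fin N, g (n + 1) = ∑ n, g n :=
  Fintype.sum_equiv (Equiv.addRight 1) _ _ fun _ => rfl

lemma HpHm_comm : Commute (Hp N) (Hm N) := by
  rw [Commute, SemiconjBy, ← sub_eq_zero, Hp, Hm, Finset.sum_mul_sum, Finset.sum_mul_sum]
  rw [show (∑ i : Fin N, ∑ j : Fin N, hm N i * hp N j)
      = ∑ j : Fin N, ∑ i : Fin N, hm N i * hp N j from Finset.sum_comm]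
  rw [← Finset.sum_sub_distrib]
  simp_rw [← Finset.sum_sub_distrib]
  have hterm : ∀ n : Fin N, (∑ m, (hp N n * hm N m - hm N m * hp N n))
      = (1/2:ℂ) • (site N pZ n - site N pZ (n+1)) := by
    intro n
    rw [Finset.sum_eq_single n]
    · exact hp_hm_same n
    · intro m _ hmn; rw [(hp_hm_ne (Ne.symm hmn)).eq, sub_self]
    · intro habs; exact absurd (Finset.mem_univ n) habs
  simp_rw [hterm]
  rw [← Finset.smul_sum, Finset.sum_sub_distrib, sum_shift (fun n => site N pZ n)]
  simp

lemma Hxx_eq : Hxx N = (2:ℂ) • (Hp N + Hm N) := by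
  rw [Hxx, Hp, Hm, ← Finset.sum_add_distrib, Finset.smul_sum]
  refine Finset.sum_congr rfl fun n _ => ?_
  rw [hp, hm]
  simp only [sp, sm]
  rw [pX_decomp, pY_decomp, site_add, site_add, site_sub, site_sub,
    site_smul, site_smul, site_smul, site_smul]
  set a := site N sPlus n
  set b := site N sMinus n
  set c := site N sPlus (n+1)
  set d := site N sMinus (n+1)
  have e : (Complex.I • b - Complex.I • a) * (Complex.I • d - Complex.I • c)
      = (-1 : ℂ) • ((b - a) * (d - c)) := by
    rw [← smul_sub, ← smul_sub, smul_mul_assoc, mul_smul_comm, smul_smul, Complex.I_mul_I]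
  have key : (a+b)*(c+d) - (b-a)*(d-c) = (a*d + b*c) + (a*d + b*c) := by noncomm_ring
  rw [e, neg_one_smul, ← sub_eq_add_neg, key, two_smul]

lemma Jc_eq : Jc N = (2 * Complex.I) • (Hp N - Hm N) := by
  rw [Jc, Hp, Hm, ← Finset.sum_sub_distrib, Finset.smul_sum]
  refine Finset.sum_congr rfl fun n _ => ?_
  rw [hp, hm]
  simp only [sp, sm]
  rw [pX_decomp, pY_decomp, site_add, site_add, site_sub, site_sub,
    site_smul, site_smul, site_smul, site_smul]
  set a := site N sPlus n
  set b := site N sMinus n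
  set c := site N sPlus (n+1)
  set d := site N sMinus (n+1)
  have e1 : (a + b) * (Complex.I • d - Complex.I • c) = Complex.I • ((a+b) * (d-c)) := by
    rw [← smul_sub, mul_smul_comm]
  have e2 : (Complex.I • b - Complex.I • a) * (c + d) = Complex.I • ((b-a) * (c+d)) := by
    rw [← smul_sub, smul_mul_assoc]
  have key : (a+b)*(d-c) - (b-a)*(c+d) = (a*d - b*c) + (a*d - b*c) := by noncomm_ring
  rw [e1, e2, ← smul_sub, key, smul_add, ← add_smul]
  congr 1
  ring

lemma Hxx_Jc_comm : Commute (Hxx N) (Jc N) := by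
  rw [Hxx_eq, Jc_eq]
  have h := HpHm_comm (N := N)
  have hc : Commute (Hp N + Hm N) (Hp N - Hm N) :=
    ((Commute.refl (Hp N)).sub_right h).add_left (h.symm.sub_right (Commute.refl (Hm N)))
  exact (hc.smul_left _).smul_right _

lemma site_neg (A : M2) (n : Fin N) : site N (-A) n = -site N A n := by
  have := site_smul (N := N) (-1 : ℂ) A n
  simpa using this

lemma site_self_comm (A : M2) (n m : Fin N) : Commute (site N A n) (site N A m) := by
  by_cases h : n = m
  · subst h; exact Commute.refl _
  · exact site_comm h _ _

lemma Hxx_transpose : (Hxx N)ᵀ = Hxx N := by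
  rw [Hxx, Matrix.transpose_sum]
  refine Finset.sum_congr rfl fun n _ => ?_
  rw [Matrix.transpose_add, Matrix.transpose_mul, Matrix.transpose_mul,
    site_transpose, site_transpose, site_transpose, site_transpose,
    pX_transpose, pY_transpose, site_neg, site_neg, neg_mul_neg]
  rw [(site_self_comm pX (n+1) n).eq, (site_self_comm pY (n+1) n).eq]

lemma Jc_transpose (hN : 1 < N) : (Jc N)ᵀ = -(Jc N) := by
  rw [Jc, Matrix.transpose_sum, ← Finset.sum_neg_distrib]
  refine Finset.sum_congr rfl fun n _ => ?_
  rw [Matrix.transpose_sub, Matrix.transpose_mul, Matrix.transpose_mul,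
    site_transpose, site_transpose, site_transpose, site_transpose,
    pX_transpose, pY_transpose, site_neg, site_neg, neg_mul, mul_neg]
  rw [(site_comm (add_one_ne hN n) pY pX).eq, (site_comm (add_one_ne hN n) pX pY).eq]
  rw [neg_sub]
  abel

end HelixAux
namespace HelixAux

variable {N : ℕ} [NeZero N]

/-- single-site phase vector -/
def dv (Q : ℝ) (j : Fin N) : Fin 2 → ℂ :=
  fun x => if x = 0 then 1 else Complex.exp (Complex.I * Q * ((j : ℕ) + 1))

def Ddiag (Q : ℝ) (j : Fin N) : M2 := Matrix.diagonal (dv Q j)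

def wv (Q : ℝ) : Sp N → ℂ := fun s => ∏ j, dv Q j (s j)

def Wd (M : ℕ) [NeZero M] (Q : ℝ) : MN M := Matrix.diagonal (wv Q)

lemma exp_IQ (Q : ℝ) (c : ℝ) :
    Complex.exp (Complex.I * Q * (c : ℂ))
      = (Real.cos (Q * c) : ℂ) + (Real.sin (Q * c) : ℂ) * Complex.I := by
  rw [show Complex.I * (Q : ℂ) * (c : ℂ) = ((Q * c : ℝ) : ℂ) * Complex.I by push_cast; ring,
    Complex.exp_mul_I, ← Complex.ofReal_cos, ← Complex.ofReal_sin]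

lemma exp_IQn (Q : ℝ) (j : ℕ) :
    Complex.exp (Complex.I * Q * ((j : ℂ) + 1))
      = (Real.cos (Q * ((j : ℝ) + 1)) : ℂ) + (Real.sin (Q * ((j : ℝ) + 1)) : ℂ) * Complex.I := by
  rw [show ((j : ℂ) + 1) = (((j : ℝ) + 1 : ℝ) : ℂ) by push_cast; ring]
  exact exp_IQ Q _

lemma exp_IQn' (Q : ℝ) (j : ℕ) :
    Complex.exp (Complex.I * ((-Q : ℝ) : ℂ) * ((j : ℂ) + 1))
      = (Real.cos (Q * ((j : ℝ) + 1)) : ℂ) - (Real.sin (Q * ((j : ℝ) + 1)) : ℂ) * Complex.I := by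
  rw [show ((j : ℂ) + 1) = (((j : ℝ) + 1 : ℝ) : ℂ) by push_cast; ring]
  rw [exp_IQ (-Q) _, show -Q * ((j : ℝ) + 1) = -(Q * ((j : ℝ) + 1)) by ring,
    Real.cos_neg, Real.sin_neg]
  push_cast
  ring

lemma exp_IQ_cancel (Q : ℝ) (c : ℂ) :
    Complex.exp (Complex.I * Q * c) * Complex.exp (Complex.I * ((-Q : ℝ) : ℂ) * c) = 1 := by
  rw [← Complex.exp_add, show Complex.I * (Q:ℂ) * c + Complex.I * ((-Q:ℝ):ℂ) * c = 0 by
    push_cast; ring, Complex.exp_zero]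

lemma Ddiag_cancel (Q : ℝ) (j : Fin N) : Ddiag Q j * Ddiag (-Q) j = 1 := by
  rw [Ddiag, Ddiag, Matrix.diagonal_mul_diagonal]
  have h : (fun i => dv Q j i * dv (-Q) j i) = fun _ : Fin 2 => (1 : ℂ) := by
    funext x
    by_cases h : x = 0
    · simp [dv, h]
    · simp only [dv, if_neg h]
      exact exp_IQ_cancel Q _
  rw [h, Matrix.diagonal_one]

lemma Wd_eq_tens (Q : ℝ) : Wd N Q = tens (fun j => Ddiag Q j) := by
  simp only [Ddiag]
  rw [tens_diagonal]
  rfl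

lemma Wd_mul_Wd (Q : ℝ) : Wd N Q * Wd N (-Q) = 1 := by
  rw [Wd_eq_tens, Wd_eq_tens, tens_mul, ← tens_one]
  have h : ((fun j => Ddiag Q j) * fun j => Ddiag (-Q) j) = fun _ : Fin N => (1 : M2) :=
    funext fun j => Ddiag_cancel Q j
  rw [h]

/-- the unit given by the twist -/
def Wu (M : ℕ) [NeZero M] (Q : ℝ) : (MN M)ˣ :=
  ⟨Wd M Q, Wd M (-Q), Wd_mul_Wd Q, by
    have h := Wd_mul_Wd (N := M) (-Q); rwa [neg_neg] at h⟩

lemma Wd_conj_site (Q : ℝ) (A : M2) (n : Fin N) :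
    Wd N Q * site N A n * Wd N (-Q) = site N (Ddiag Q n * A * Ddiag (-Q) n) n := by
  rw [Wd_eq_tens, Wd_eq_tens, site_eq_tens, site_eq_tens, tens_mul, tens_mul]
  have h : (((fun j => Ddiag Q j) * fun j => if j = n then A else 1) * fun j => Ddiag (-Q) j)
      = fun j => if j = n then Ddiag Q n * A * Ddiag (-Q) n else 1 := by
    funext j
    by_cases h : j = n
    · subst h; simp
    · simp only [Pi.mul_apply, if_neg h, mul_one]
      exact Ddiag_cancel Q j
  rw [h]

lemma rot2X {e e' : ℂ} (c s : ℝ) (h1 : e = (c : ℂ) + (s : ℂ) * Complex.I)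
    (h2 : e' = (c : ℂ) - (s : ℂ) * Complex.I) :
    Matrix.diagonal (fun x : Fin 2 => if x = 0 then 1 else e) * pX *
        Matrix.diagonal (fun x : Fin 2 => if x = 0 then 1 else e')
      = (c : ℂ) • pX + (s : ℂ) • pY := by
  subst h1; subst h2
  ext a b
  fin_cases a <;> fin_cases b <;>
    simp [pX, pY, Matrix.mul_apply, Fin.sum_univ_two, Matrix.diagonal_apply,
      Complex.I_sq, Complex.I_mul_I] <;> ring_nf <;> simp [Complex.I_sq] <;> ring

lemma rot2Y {e e' : ℂ} (c s : ℝ) (h1 : e = (c : ℂ) + (s : ℂ) * Complex.I)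
    (h2 : e' = (c : ℂ) - (s : ℂ) * Complex.I) :
    Matrix.diagonal (fun x : Fin 2 => if x = 0 then 1 else e) * pY *
        Matrix.diagonal (fun x : Fin 2 => if x = 0 then 1 else e')
      = (c : ℂ) • pY - (s : ℂ) • pX := by
  subst h1; subst h2
  ext a b
  fin_cases a <;> fin_cases b <;>
    simp [pX, pY, Matrix.mul_apply, Fin.sum_univ_two, Matrix.diagonal_apply,
      Complex.I_sq, Complex.I_mul_I] <;> ring_nf <;> simp [Complex.I_sq] <;> ring

lemma Ddiag_conj_X (Q : ℝ) (j : Fin N) :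
    Ddiag Q j * pX * Ddiag (-Q) j
      = (Real.cos (Q * ((j:ℕ)+1)) : ℂ) • pX + (Real.sin (Q * ((j:ℕ)+1)) : ℂ) • pY := by
  simp only [Ddiag, dv]
  exact rot2X _ _ (exp_IQn Q (j:ℕ)) (exp_IQn' Q (j:ℕ))

lemma Ddiag_conj_Y (Q : ℝ) (j : Fin N) :
    Ddiag Q j * pY * Ddiag (-Q) j
      = (Real.cos (Q * ((j:ℕ)+1)) : ℂ) • pY - (Real.sin (Q * ((j:ℕ)+1)) : ℂ) • pX := by
  simp only [Ddiag, dv]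
  exact rot2Y _ _ (exp_IQn Q (j:ℕ)) (exp_IQn' Q (j:ℕ))

lemma Wd_conj_siteX (Q : ℝ) (n : Fin N) :
    Wd N Q * site N pX n * Wd N (-Q)
      = (Real.cos (Q * ((n:ℕ)+1)) : ℂ) • site N pX n
        + (Real.sin (Q * ((n:ℕ)+1)) : ℂ) • site N pY n := by
  rw [Wd_conj_site, Ddiag_conj_X, site_add, site_smul, site_smul]

lemma Wd_conj_siteY (Q : ℝ) (n : Fin N) :
    Wd N Q * site N pY n * Wd N (-Q)
      = (Real.cos (Q * ((n:ℕ)+1)) : ℂ) • site N pY n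
        - (Real.sin (Q * ((n:ℕ)+1)) : ℂ) • site N pX n := by
  rw [Wd_conj_site, Ddiag_conj_Y, site_sub, site_smul, site_smul]

lemma conj_mul (W W' : MN N) (h : W' * W = 1) (A B : MN N) :
    (W * A * W') * (W * B * W') = W * (A * B) * W' := by
  calc (W * A * W') * (W * B * W') = W * A * ((W' * W) * (B * W')) := by noncomm_ring
    _ = W * A * (B * W') := by rw [h, one_mul]
    _ = W * (A * B) * W' := by noncomm_ring

lemma rot_bond (x y x' y' : MN N) (a b a' b' : ℂ) :
    (a•x + b•y) * (a'•x' + b'•y') + (a•y - b•x) * (a'•y' - b'•x')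
      = (a*a' + b*b') • (x*x' + y*y') + (a*b' - b*a') • (x*y' - y*x') := by
  simp only [add_mul, mul_add, sub_mul, mul_sub, smul_mul_assoc, mul_smul_comm, smul_smul,
    smul_add, smul_sub, add_smul, sub_smul]
  module

lemma rot_bondJ (x y x' y' : MN N) (a b a' b' : ℂ) :
    (a•x + b•y) * (a'•y' - b'•x') - (a•y - b•x) * (a'•x' + b'•y')
      = (a*a' + b*b') • (x*y' - y*x') - (a*b' - b*a') • (x*x' + y*y') := by
  simp only [add_mul, mul_add, sub_mul, mul_sub, smul_mul_assoc, mul_smul_comm, smul_smul,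
    smul_add, smul_sub, add_smul, sub_smul]
  module

-- index arithmetic
lemma fin_add_one_val (n : Fin N) :
    ((n + 1 : Fin N) : ℕ) = (n : ℕ) + 1 ∨
      (((n + 1 : Fin N) : ℕ) = 0 ∧ (n : ℕ) + 1 = N) := by
  have hval : ((n + 1 : Fin N) : ℕ) = ((n : ℕ) + 1) % N := by
    rw [Fin.add_def]
    simp only [Fin.val_one']
    conv_rhs => rw [Nat.add_mod, Nat.mod_eq_of_lt n.isLt]
  rcases Nat.lt_or_ge ((n : ℕ) + 1) N with h | h
  · left; rw [hval, Nat.mod_eq_of_lt h]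
  · right
    have he : (n : ℕ) + 1 = N := by have := n.isLt; omega
    refine ⟨?_, he⟩
    rw [hval, he, Nat.mod_self]

lemma trig1 (Q : ℝ) (hc : Real.cos (Q * N) = 1) (hs : Real.sin (Q * N) = 0) (n : Fin N) :
    Real.cos (Q * ((n:ℕ)+1)) * Real.cos (Q * (((n+1 : Fin N):ℕ)+1))
      + Real.sin (Q * ((n:ℕ)+1)) * Real.sin (Q * (((n+1 : Fin N):ℕ)+1)) = Real.cos Q := by
  rcases fin_add_one_val n with h | ⟨h0, hN⟩
  · have hθ : (Q * ((((n+1 : Fin N):ℕ):ℝ)+1) : ℝ) = Q * (((n:ℕ):ℝ)+1) + Q := by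
      rw [h]; push_cast; ring
    rw [hθ, Real.cos_add, Real.sin_add]
    set θ := Q * (((n:ℕ):ℝ)+1)
    linear_combination Real.cos Q * (Real.sin_sq_add_cos_sq θ)
  · have hθ' : (Q * ((((n+1 : Fin N):ℕ):ℝ)+1) : ℝ) = Q := by rw [h0]; norm_num
    have hθ : (Q * (((n:ℕ):ℝ)+1) : ℝ) = Q * N := by
      have hcast : (((n:ℕ):ℝ)+1) = (N:ℝ) := by exact_mod_cast hN
      rw [hcast]
    rw [hθ', hθ, hc, hs]
    norm_num

lemma trig2 (Q : ℝ) (hc : Real.cos (Q * N) = 1) (hs : Real.sin (Q * N) = 0) (n : Fin N) :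
    Real.cos (Q * ((n:ℕ)+1)) * Real.sin (Q * (((n+1 : Fin N):ℕ)+1))
      - Real.sin (Q * ((n:ℕ)+1)) * Real.cos (Q * (((n+1 : Fin N):ℕ)+1)) = Real.sin Q := by
  rcases fin_add_one_val n with h | ⟨h0, hN⟩
  · have hθ : (Q * ((((n+1 : Fin N):ℕ):ℝ)+1) : ℝ) = Q * (((n:ℕ):ℝ)+1) + Q := by
      rw [h]; push_cast; ring
    rw [hθ, Real.cos_add, Real.sin_add]
    set θ := Q * (((n:ℕ):ℝ)+1)
    linear_combination Real.sin Q * (Real.sin_sq_add_cos_sq θ)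
  · have hθ' : (Q * ((((n+1 : Fin N):ℕ):ℝ)+1) : ℝ) = Q := by rw [h0]; norm_num
    have hθ : (Q * (((n:ℕ):ℝ)+1) : ℝ) = Q * N := by
      have hcast : (((n:ℕ):ℝ)+1) = (N:ℝ) := by exact_mod_cast hN
      rw [hcast]
    rw [hθ', hθ, hc, hs]
    norm_num

lemma Wd_conj_Hxx (Q : ℝ) (hc : Real.cos (Q * N) = 1) (hs : Real.sin (Q * N) = 0) :
    Wd N Q * Hxx N * Wd N (-Q)
      = (Real.cos Q : ℂ) • Hxx N + (Real.sin Q : ℂ) • Jc N := by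
  have hWW : Wd N (-Q) * Wd N Q = 1 := by
    have h := Wd_mul_Wd (N := N) (-Q); rwa [neg_neg] at h
  rw [Hxx, Jc, Finset.mul_sum, Finset.sum_mul, Finset.smul_sum, Finset.smul_sum,
    ← Finset.sum_add_distrib]
  refine Finset.sum_congr rfl fun n _ => ?_
  rw [mul_add, add_mul]
  rw [← conj_mul (Wd N Q) (Wd N (-Q)) hWW (site N pX n) (site N pX (n+1)),
    ← conj_mul (Wd N Q) (Wd N (-Q)) hWW (site N pY n) (site N pY (n+1))]
  rw [Wd_conj_siteX, Wd_conj_siteX, Wd_conj_siteY, Wd_conj_siteY]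
  rw [rot_bond]
  have e1 : ((Real.cos (Q * ((n:ℕ)+1)) : ℂ) * (Real.cos (Q * (((n+1 : Fin N):ℕ)+1)) : ℂ)
      + (Real.sin (Q * ((n:ℕ)+1)) : ℂ) * (Real.sin (Q * (((n+1 : Fin N):ℕ)+1)) : ℂ))
      = (Real.cos Q : ℂ) := by
    rw [← Complex.ofReal_mul, ← Complex.ofReal_mul, ← Complex.ofReal_add, trig1 Q hc hs n]
  have e2 : ((Real.cos (Q * ((n:ℕ)+1)) : ℂ) * (Real.sin (Q * (((n+1 : Fin N):ℕ)+1)) : ℂ)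
      - (Real.sin (Q * ((n:ℕ)+1)) : ℂ) * (Real.cos (Q * (((n+1 : Fin N):ℕ)+1)) : ℂ))
      = (Real.sin Q : ℂ) := by
    rw [← Complex.ofReal_mul, ← Complex.ofReal_mul, ← Complex.ofReal_sub, trig2 Q hc hs n]
  rw [e1, e2]

-- the global spin flip
def Gf (M : ℕ) : MN M := tens (fun _ => pX)

lemma pX_mul_pX : pX * pX = 1 := by
  ext i j; fin_cases i <;> fin_cases j <;>
    simp [pX, Matrix.mul_apply, Fin.sum_univ_two, Matrix.one_apply]

lemma Gf_mul_Gf : Gf N * Gf N = 1 := by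
  rw [Gf, tens_mul, ← tens_one]
  have h : ((fun _ : Fin N => pX) * fun _ => pX) = fun _ : Fin N => (1 : M2) :=
    funext fun _ => pX_mul_pX
  rw [h]

lemma Gf_conj_site (A : M2) (n : Fin N) :
    Gf N * site N A n * Gf N = site N (pX * A * pX) n := by
  rw [Gf, site_eq_tens, site_eq_tens, tens_mul, tens_mul]
  have h : (((fun _ : Fin N => pX) * fun j => if j = n then A else 1) * fun _ => pX)
      = fun j => if j = n then pX * A * pX else 1 := by
    funext j
    by_cases h : j = n
    · subst h; simp
    · simp only [Pi.mul_apply, if_neg h, mul_one]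
      exact pX_mul_pX
  rw [h]

lemma XXX : pX * pX * pX = pX := by rw [pX_mul_pX, one_mul]

lemma XYX : pX * pY * pX = -pY := by
  ext i j; fin_cases i <;> fin_cases j <;>
    simp [pX, pY, Matrix.mul_apply, Fin.sum_univ_two]

lemma Gf_conj_Hxx : Gf N * Hxx N * Gf N = Hxx N := by
  have hGG : Gf N * Gf N = 1 := Gf_mul_Gf
  rw [Hxx, Finset.mul_sum, Finset.sum_mul]
  refine Finset.sum_congr rfl fun n _ => ?_
  rw [mul_add, add_mul,
    ← conj_mul (Gf N) (Gf N) hGG (site N pX n) (site N pX (n+1)),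
    ← conj_mul (Gf N) (Gf N) hGG (site N pY n) (site N pY (n+1)),
    Gf_conj_site, Gf_conj_site, Gf_conj_site, Gf_conj_site, XXX, XYX, site_neg, site_neg,
    neg_mul_neg]

lemma Gf_conj_Jc : Gf N * Jc N * Gf N = -(Jc N) := by
  have hGG : Gf N * Gf N = 1 := Gf_mul_Gf
  rw [Jc, Finset.mul_sum, Finset.sum_mul, ← Finset.sum_neg_distrib]
  refine Finset.sum_congr rfl fun n _ => ?_
  rw [mul_sub, sub_mul,
    ← conj_mul (Gf N) (Gf N) hGG (site N pX n) (site N pY (n+1)),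
    ← conj_mul (Gf N) (Gf N) hGG (site N pY n) (site N pX (n+1)),
    Gf_conj_site, Gf_conj_site, Gf_conj_site, Gf_conj_site, XXX, XYX, site_neg, site_neg,
    mul_neg, neg_mul]
  abel

end HelixAux
namespace HelixAux

open NormedSpace

variable {N : ℕ} [NeZero N]

/-- `mulVec` by a fixed vector, as a linear map in the matrix. -/
def mulVecL (v : Sp N → ℂ) : MN N →ₗ[ℂ] (Sp N → ℂ) where
  toFun A := A.mulVec v
  map_add' A B := Matrix.add_mulVec A B v
  map_smul' c A := Matrix.smul_mulVec c A v

lemma sum_mulVec {ι : Type*} (s : Finset ι) (f : ι → MN N) (v : Sp N → ℂ) :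
    (∑ i ∈ s, f i).mulVec v = ∑ i ∈ s, (f i).mulVec v :=
  map_sum (mulVecL v) f s

lemma exp_kill {M : MN N} {v : Sp N → ℂ} (h : M.mulVec v = 0) :
    (exp M).mulVec v = v := by
  letI : SeminormedRing (MN N) := Matrix.linftyOpSemiNormedRing
  letI : NormedRing (MN N) := Matrix.linftyOpNormedRing
  letI : NormedAlgebra ℂ (MN N) := Matrix.linftyOpNormedAlgebra
  letI : CompleteSpace (MN N) := FiniteDimensional.complete ℂ _
  have hpow : ∀ k : ℕ, (M ^ (k + 1)).mulVec v = 0 := by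
    intro k
    rw [pow_succ, ← Matrix.mulVec_mulVec, h, Matrix.mulVec_zero]
  have hsum : Summable (fun k : ℕ => ((Nat.factorial k : ℂ))⁻¹ • M ^ k) :=
    NormedSpace.expSeries_summable' (𝕂 := ℂ) M
  let Lc : MN N →L[ℂ] (Sp N → ℂ) :=
    ⟨mulVecL v, (mulVecL v).continuous_of_finiteDimensional⟩
  have hmap : Lc (∑' k : ℕ, ((Nat.factorial k : ℂ))⁻¹ • M ^ k)
      = ∑' k : ℕ, Lc (((Nat.factorial k : ℂ))⁻¹ • M ^ k) := Lc.map_tsum hsum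
  rw [NormedSpace.exp_eq_tsum ℂ]
  show Lc (∑' k : ℕ, ((Nat.factorial k : ℂ))⁻¹ • M ^ k) = v
  rw [hmap]
  have hLc : ∀ k : ℕ, Lc (((Nat.factorial k : ℂ))⁻¹ • M ^ k)
      = ((Nat.factorial k : ℂ))⁻¹ • ((M ^ k).mulVec v) := fun k => by
    rw [_root_.map_smul]; rfl
  have hterm : ∀ k : ℕ, Lc (((Nat.factorial k : ℂ))⁻¹ • M ^ k) = if k = 0 then v else 0 := by
    intro k
    rw [hLc k]
    cases k with
    | zero => simp [Matrix.one_mulVec]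
    | succ k => rw [hpow k, smul_zero, if_neg (Nat.succ_ne_zero k)]
  calc ∑' k : ℕ, Lc (((Nat.factorial k : ℂ))⁻¹ • M ^ k) = ∑' k : ℕ, if k = 0 then v else 0 := by
        exact tsum_congr hterm
    _ = v := by
        rw [tsum_eq_single 0]
        · simp
        · intro b hb; rw [if_neg hb]

lemma exp_kill_left {M : MN N} {v : Sp N → ℂ} (h : Matrix.vecMul v M = 0) :
    Matrix.vecMul v (exp M) = v := by
  have ht : (Mᵀ).mulVec v = 0 := by rw [Matrix.mulVec_transpose, h]
  calc Matrix.vecMul v (exp M) = (exp M)ᵀ.mulVec v := by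
        rw [Matrix.mulVec_transpose]
    _ = (exp Mᵀ).mulVec v := by rw [Matrix.exp_transpose]
    _ = v := exp_kill ht

lemma exp_add_kill {A B : MN N} {v : Sp N → ℂ} (hc : Commute A B) (h : B.mulVec v = 0) :
    (exp (A + B)).mulVec v = (exp A).mulVec v := by
  rw [Matrix.exp_add_of_commute A B hc, ← Matrix.mulVec_mulVec, exp_kill h]

lemma exp_add_kill_left {A B : MN N} {v : Sp N → ℂ} (hc : Commute A B)
    (h : Matrix.vecMul v B = 0) :
    Matrix.vecMul v (exp (B + A)) = Matrix.vecMul v (exp A) := by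
  rw [Matrix.exp_add_of_commute B A hc.symm, ← Matrix.vecMul_vecMul, exp_kill_left h]

-- constant vectors and row sums
lemma row_sum_pX (x : Fin 2) : pX x 0 + pX x 1 = 1 := by fin_cases x <;> simp [pX]
lemma row_sum_one (x : Fin 2) : (1 : M2) x 0 + (1 : M2) x 1 = 1 := by
  fin_cases x <;> simp [Matrix.one_apply]
lemma col_sum_pX (x : Fin 2) : pX 0 x + pX 1 x = 1 := by fin_cases x <;> simp [pX]
lemma col_sum_one (x : Fin 2) : (1 : M2) 0 x + (1 : M2) 1 x = 1 := by
  fin_cases x <;> simp [Matrix.one_apply]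

lemma tens_mulVec_cst (F : Fin N → M2) (c : ℂ) :
    (tens F).mulVec (fun _ => c) = fun s => c * ∏ j, (F j (s j) 0 + F j (s j) 1) := by
  funext s
  simp only [Matrix.mulVec, dotProduct, tens_apply]
  rw [← Finset.sum_mul, ← Fintype.prod_sum (fun j x => F j (s j) x), mul_comm]
  congr 1
  exact Finset.prod_congr rfl fun j _ => by rw [Fin.sum_univ_two]

lemma tens_vecMul_cst (F : Fin N → M2) (c : ℂ) :
    Matrix.vecMul (fun _ => c) (tens F) = fun t => c * ∏ j, (F j 0 (t j) + F j 1 (t j)) := by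
  funext t
  simp only [Matrix.vecMul, dotProduct, tens_apply]
  rw [← Finset.mul_sum, ← Fintype.prod_sum (fun j x => F j x (t j))]
  congr 1
  exact Finset.prod_congr rfl fun j _ => by rw [Fin.sum_univ_two]

lemma siteX_mulVec_cst (k : Fin N) (c : ℂ) :
    (site N pX k).mulVec (fun _ => c) = (fun _ => c) := by
  rw [site_eq_tens, tens_mulVec_cst]
  funext s
  rw [Finset.prod_congr rfl (fun j _ => ?_), Finset.prod_const_one, mul_one]
  by_cases h : j = k
  · rw [if_pos h]; exact row_sum_pX (s j)
  · rw [if_neg h]; exact row_sum_one (s j)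

lemma siteX_vecMul_cst (k : Fin N) (c : ℂ) :
    Matrix.vecMul (fun _ => c) (site N pX k) = (fun _ => c) := by
  rw [site_eq_tens, tens_vecMul_cst]
  funext t
  rw [Finset.prod_congr rfl (fun j _ => ?_), Finset.prod_const_one, mul_one]
  by_cases h : j = k
  · rw [if_pos h]; exact col_sum_pX (t j)
  · rw [if_neg h]; exact col_sum_one (t j)

lemma Jc_decomp (hN : 1 < N) :
    Jc N = ∑ n : Fin N, (site N pY (n+1) * (site N pX n - 1)
      + (site N pY (n+1) - site N pY n) + site N pY n * (1 - site N pX (n+1))) := by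
  rw [Jc]
  refine Finset.sum_congr rfl fun n _ => ?_
  have hcomm : site N pX n * site N pY (n+1) = site N pY (n+1) * site N pX n :=
    (site_comm (Ne.symm (add_one_ne hN n)) pX pY).eq
  rw [hcomm]
  noncomm_ring

lemma Jc_decomp' (hN : 1 < N) :
    Jc N = ∑ n : Fin N, ((site N pX n - 1) * site N pY (n+1)
      + (site N pY (n+1) - site N pY n) + (1 - site N pX (n+1)) * site N pY n) := by
  rw [Jc]
  refine Finset.sum_congr rfl fun n _ => ?_
  have hcomm : site N pX (n+1) * site N pY n = site N pY n * site N pX (n+1) :=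
    (site_comm (add_one_ne hN n) pX pY).eq
  rw [show site N pY n * site N pX (n+1) = site N pX (n+1) * site N pY n from hcomm.symm]
  noncomm_ring

lemma Jc_mulVec_cst (hN : 1 < N) (c : ℂ) : (Jc N).mulVec (fun _ => c) = 0 := by
  rw [Jc_decomp hN, sum_mulVec]
  have hterm : ∀ n : Fin N,
      (site N pY (n+1) * (site N pX n - 1)
        + (site N pY (n+1) - site N pY n) + site N pY n * (1 - site N pX (n+1))).mulVec
        (fun _ => c)
      = (site N pY (n+1) - site N pY n).mulVec (fun _ => c) := by
    intro n
    have z1 : (site N pX n - 1).mulVec (fun _ => c) = 0 := by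
      rw [Matrix.sub_mulVec, siteX_mulVec_cst, Matrix.one_mulVec, sub_self]
    have z2 : ((1 : MN N) - site N pX (n+1)).mulVec (fun _ => c) = 0 := by
      rw [Matrix.sub_mulVec, siteX_mulVec_cst, Matrix.one_mulVec, sub_self]
    rw [Matrix.add_mulVec, Matrix.add_mulVec, ← Matrix.mulVec_mulVec, ← Matrix.mulVec_mulVec,
      z1, z2, Matrix.mulVec_zero, Matrix.mulVec_zero, zero_add, add_zero]
  rw [Finset.sum_congr rfl (fun n _ => hterm n), ← sum_mulVec]
  rw [Finset.sum_sub_distrib, sum_shift (fun n => site N pY n), sub_self, Matrix.zero_mulVec]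

lemma Jc_vecMul_cst (hN : 1 < N) (c : ℂ) : Matrix.vecMul (fun _ => c) (Jc N) = 0 := by
  rw [Jc_decomp' hN]
  have hsum : Matrix.vecMul (fun _ => c) (∑ n : Fin N, ((site N pX n - 1) * site N pY (n+1)
      + (site N pY (n+1) - site N pY n) + (1 - site N pX (n+1)) * site N pY n))
      = ∑ n : Fin N, Matrix.vecMul (fun _ => c) ((site N pX n - 1) * site N pY (n+1)
      + (site N pY (n+1) - site N pY n) + (1 - site N pX (n+1)) * site N pY n) := by
    induction (Finset.univ : Finset (Fin N)) using Finset.induction with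
    | empty => simp [Matrix.vecMul_zero]
    | insert _ _ h ih => rw [Finset.sum_insert h, Finset.sum_insert h, Matrix.vecMul_add, ih]
  rw [hsum]
  have hterm : ∀ n : Fin N,
      Matrix.vecMul (fun _ => c) ((site N pX n - 1) * site N pY (n+1)
        + (site N pY (n+1) - site N pY n) + (1 - site N pX (n+1)) * site N pY n)
      = Matrix.vecMul (fun _ => c) (site N pY (n+1) - site N pY n) := by
    intro n
    have z1 : Matrix.vecMul (fun _ => c) (site N pX n - 1) = 0 := by
      rw [Matrix.vecMul_sub, siteX_vecMul_cst, Matrix.vecMul_one, sub_self]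
    have z2 : Matrix.vecMul (fun _ => c) ((1 : MN N) - site N pX (n+1)) = 0 := by
      rw [Matrix.vecMul_sub, siteX_vecMul_cst, Matrix.vecMul_one, sub_self]
    rw [Matrix.vecMul_add, Matrix.vecMul_add, ← Matrix.vecMul_vecMul, ← Matrix.vecMul_vecMul,
      z1, z2, Matrix.zero_vecMul, Matrix.zero_vecMul, zero_add, add_zero]
  rw [Finset.sum_congr rfl (fun n _ => hterm n)]
  have : ∑ n : Fin N, Matrix.vecMul (fun _ => c) (site N pY (n+1) - site N pY n)
      = Matrix.vecMul (fun _ => c) (∑ n : Fin N, (site N pY (n+1) - site N pY n)) := by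
    induction (Finset.univ : Finset (Fin N)) using Finset.induction with
    | empty => simp [Matrix.vecMul_zero]
    | insert _ _ h ih => rw [Finset.sum_insert h, Finset.sum_insert h, Matrix.vecMul_add, ih]
  rw [this, Finset.sum_sub_distrib, sum_shift (fun n => site N pY n), sub_self,
    Matrix.vecMul_zero]

end HelixAux
namespace HelixAux

open NormedSpace

variable {N : ℕ} [NeZero N]

def permEquiv (e : Fin N ≃ Fin N) : Sp N ≃ Sp N where
  toFun s := s ∘ e
  invFun s := s ∘ e.symm
  left_inv s := by funext j; simp
  right_inv s := by funext j; simp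

lemma permEquiv_apply (e : Fin N ≃ Fin N) (s : Sp N) (j : Fin N) :
    permEquiv e s j = s (e j) := rfl

lemma site_submatrix (e : Fin N ≃ Fin N) (A : M2) (m : Fin N) :
    (site N A m).submatrix (permEquiv e) (permEquiv e) = site N A (e m) := by
  ext s t
  simp only [Matrix.submatrix_apply, site, Matrix.of_apply, permEquiv_apply]
  rw [← Equiv.prod_comp e (fun j => if j = e m then A (s j) (t j)
    else if s j = t j then (1:ℂ) else 0)]
  refine Finset.prod_congr rfl fun j _ => ?_
  have hiff : j = m ↔ e j = e m := ⟨fun h => by rw [h], fun h => e.injective h⟩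
  by_cases h : j = m
  · rw [if_pos h, if_pos (hiff.mp h)]
  · rw [if_neg h, if_neg (fun hh => h (hiff.mpr hh))]; congr

/-- the reindexing algebra automorphism associated to a translation -/
def φmap (N : ℕ) [NeZero N] (e : Fin N ≃ Fin N) : MN N ≃ₐ[ℂ] MN N :=
  Matrix.reindexAlgEquiv ℂ ℂ ((permEquiv e).symm)

lemma φmap_apply (e : Fin N ≃ Fin N) (M : MN N) :
    φmap N e M = M.submatrix (permEquiv e) (permEquiv e) := by
  rw [φmap, Matrix.reindexAlgEquiv_apply, Matrix.reindex_apply, Equiv.symm_symm]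

lemma φmap_site (e : Fin N ≃ Fin N) (A : M2) (m : Fin N) :
    φmap N e (site N A m) = site N A (e m) := by
  rw [φmap_apply, site_submatrix]

lemma φmap_Hxx (c : Fin N) : φmap N (Equiv.subRight c) (Hxx N) = Hxx N := by
  rw [Hxx, map_sum]
  have hterm : ∀ m : Fin N,
      φmap N (Equiv.subRight c) (site N pX m * site N pX (m+1)
        + site N pY m * site N pY (m+1))
      = site N pX (m - c) * site N pX ((m - c) + 1)
        + site N pY (m - c) * site N pY ((m - c) + 1) := by
    intro m
    rw [_root_.map_add, _root_.map_mul, _root_.map_mul,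
      φmap_site, φmap_site, φmap_site, φmap_site]
    simp only [Equiv.subRight_apply]
    have hshift : m + 1 - c = (m - c) + 1 := by
      rw [sub_add_eq_add_sub]
    rw [hshift]
  rw [Finset.sum_congr rfl (fun m _ => hterm m)]
  exact Fintype.sum_equiv (Equiv.subRight c) _ _ fun m => rfl

lemma φmap_exp (e : Fin N ≃ Fin N) (M : MN N) :
    φmap N e (exp M) = exp (φmap N e M) := by
  letI : SeminormedRing (MN N) := Matrix.linftyOpSemiNormedRing
  letI : NormedRing (MN N) := Matrix.linftyOpNormedRing
  letI : NormedAlgebra ℂ (MN N) := Matrix.linftyOpNormedAlgebra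
  letI : CompleteSpace (MN N) := FiniteDimensional.complete ℂ _
  letI : NormedAlgebra ℚ (MN N) := NormedAlgebra.restrictScalars ℚ ℂ (MN N)
  exact NormedSpace.map_exp (φmap N e : MN N →+* MN N)
    ((φmap N e).toLinearMap.continuous_of_finiteDimensional) M

lemma φmap_Ut (c : Fin N) (u : ℝ) : φmap N (Equiv.subRight c) (Ut N u) = Ut N u := by
  rw [Ut, φmap_exp]
  congr 1
  rw [_root_.map_smul, φmap_Hxx]

lemma cst_dot_submatrix (M : MN N) (ρ : Sp N ≃ Sp N) (a b : ℂ) :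
    dotProduct (fun _ => a) (M.mulVec (fun _ => b))
      = dotProduct (fun _ => a) ((M.submatrix ρ ρ).mulVec (fun _ => b)) := by
  simp only [dotProduct, Matrix.mulVec, Matrix.submatrix_apply]
  rw [← Equiv.sum_comp ρ (fun s => a * ∑ t, M s t * b)]
  refine Finset.sum_congr rfl fun s _ => ?_
  congr 1
  rw [← Equiv.sum_comp ρ (fun t => M (ρ s) t * b)]

end HelixAux
namespace HelixAux

open NormedSpace

variable {N : ℕ} [NeZero N]

lemma helix_zero : helix N 0 = fun _ : Sp N => (((Real.sqrt 2 : ℂ))⁻¹ ^ N) := by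
  funext s
  rw [helix]
  have h : ∀ j : Fin N, ((Real.sqrt 2 : ℂ))⁻¹ *
      (if s j = 0 then 1 else Complex.exp (Complex.I * ((0:ℝ):ℂ) * ((j:ℕ)+1)))
      = ((Real.sqrt 2 : ℂ))⁻¹ := by
    intro j
    have he : Complex.exp (Complex.I * ((0:ℝ):ℂ) * ((j:ℕ)+1)) = 1 := by
      simp
    rw [he]; simp
  rw [Finset.prod_congr rfl (fun j _ => h j), Finset.prod_const, Finset.card_univ,
    Fintype.card_fin]

lemma helix_eq (Q : ℝ) : helix N Q = fun s => wv Q s * (((Real.sqrt 2 : ℂ))⁻¹ ^ N) := by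
  funext s
  rw [helix, Finset.prod_mul_distrib, Finset.prod_const, Finset.card_univ, Fintype.card_fin,
    mul_comm]
  rfl

lemma cc_conj : (starRingEnd ℂ) (((Real.sqrt 2 : ℂ))⁻¹ ^ N) = ((Real.sqrt 2 : ℂ))⁻¹ ^ N := by
  rw [map_pow, map_inv₀, Complex.conj_ofReal]

lemma dv_conj (Q : ℝ) (j : Fin N) (x : Fin 2) :
    (starRingEnd ℂ) (dv Q j x) = dv (-Q) j x := by
  rw [dv, dv]
  by_cases h : x = 0
  · simp [h]
  · simp only [if_neg h]
    rw [← Complex.exp_conj]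
    congr 1
    rw [RingHom.map_mul, RingHom.map_mul, Complex.conj_I, Complex.conj_ofReal,
      RingHom.map_add, RingHom.map_one, map_natCast]
    push_cast
    ring

lemma wv_conj (Q : ℝ) (s : Sp N) : (starRingEnd ℂ) (wv Q s) = wv (-Q) s := by
  rw [wv, wv, map_prod]
  exact Finset.prod_congr rfl fun j _ => dv_conj Q j (s j)

lemma diagonal_mulVec (d v : Sp N → ℂ) :
    (Matrix.diagonal d).mulVec v = fun s => d s * v s := by
  funext s
  rw [Matrix.mulVec_diagonal]

lemma expval_helix (Q : ℝ) (M : MN N) :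
    expval N (helix N Q) M
      = dotProduct (star (helix N 0))
          ((Wd N (-Q) * M * Wd N Q).mulVec (helix N 0)) := by
  have hΩ : helix N 0 = fun _ : Sp N => (((Real.sqrt 2 : ℂ))⁻¹ ^ N) := helix_zero
  have hψW : (Wd N Q).mulVec (helix N 0) = helix N Q := by
    rw [hΩ, Wd, diagonal_mulVec, helix_eq Q]
  have hsand : (Wd N (-Q) * M * Wd N Q).mulVec (helix N 0)
      = (Wd N (-Q)).mulVec (M.mulVec (helix N Q)) := by
    rw [← Matrix.mulVec_mulVec, ← Matrix.mulVec_mulVec, hψW]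
  rw [expval, hsand, Wd, diagonal_mulVec]
  rw [dotProduct, dotProduct]
  refine Finset.sum_congr rfl fun s _ => ?_
  simp only [Pi.star_apply, helix_eq Q, hΩ, Complex.star_def]
  rw [RingHom.map_mul, wv_conj, cc_conj]
  ring

lemma star_cst : star (fun _ : Sp N => (((Real.sqrt 2 : ℂ))⁻¹ ^ N))
    = fun _ : Sp N => (((Real.sqrt 2 : ℂ))⁻¹ ^ N) := by
  funext s
  exact cc_conj

lemma expval_translate (u : ℝ) (n : Fin N) :
    expval N (helix N 0) (Ut N u * site N pX n * Ut N (-u)) = SN N u := by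
  rw [SN, expval, expval, helix_zero, star_cst]
  rw [cst_dot_submatrix (Ut N u * site N pX n * Ut N (-u)) (permEquiv (Equiv.subRight n)) _ _]
  have hsub : (Ut N u * site N pX n * Ut N (-u)).submatrix
      (permEquiv (Equiv.subRight n)) (permEquiv (Equiv.subRight n))
      = Ut N u * site N pX 0 * Ut N (-u) := by
    have h := φmap_apply (Equiv.subRight n) (Ut N u * site N pX n * Ut N (-u))
    rw [← h, _root_.map_mul, _root_.map_mul, φmap_Ut, φmap_Ut, φmap_site,
      Equiv.subRight_apply, sub_self]
  rw [hsub]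

lemma Gf_mulVec_cst (c : ℂ) : (Gf N).mulVec (fun _ : Sp N => c) = fun _ => c := by
  rw [Gf, tens_mulVec_cst]
  funext s
  rw [Finset.prod_congr rfl (fun j _ => row_sum_pX (s j)), Finset.prod_const_one, mul_one]

lemma Gf_vecMul_cst (c : ℂ) : Matrix.vecMul (fun _ : Sp N => c) (Gf N) = fun _ => c := by
  rw [Gf, tens_vecMul_cst]
  funext s
  rw [Finset.prod_congr rfl (fun j _ => col_sum_pX (s j)), Finset.prod_const_one, mul_one]

lemma Wconj_exp (Q : ℝ) (A : MN N) :
    Wd N Q * NormedSpace.exp A * Wd N (-Q)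
      = NormedSpace.exp (Wd N Q * A * Wd N (-Q)) :=
  (Matrix.exp_units_conj (Wu N Q) A).symm

lemma Wconj_exp' (Q : ℝ) (A : MN N) :
    Wd N (-Q) * NormedSpace.exp A * Wd N Q
      = NormedSpace.exp (Wd N (-Q) * A * Wd N Q) := by
  have h := Wconj_exp (N := N) (-Q) A
  rwa [neg_neg] at h

lemma Gf_conj_exp (A : MN N) :
    Gf N * NormedSpace.exp A * Gf N = NormedSpace.exp (Gf N * A * Gf N) :=
  (Matrix.exp_units_conj ⟨Gf N, Gf N, Gf_mul_Gf, Gf_mul_Gf⟩ A).symm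

lemma Gf_conj_Ut (u : ℝ) : Gf N * Ut N u * Gf N = Ut N u := by
  rw [Ut, Gf_conj_exp]
  congr 1
  rw [mul_smul_comm, smul_mul_assoc, Gf_conj_Hxx]

lemma expval_Y_zero (u : ℝ) (k : Fin N) :
    dotProduct (fun _ : Sp N => (((Real.sqrt 2 : ℂ))⁻¹ ^ N))
      ((Ut N u * site N pY k * Ut N (-u)).mulVec
        (fun _ : Sp N => (((Real.sqrt 2 : ℂ))⁻¹ ^ N))) = 0 := by
  set cc := (((Real.sqrt 2 : ℂ))⁻¹ ^ N) with hccdef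
  set M := Ut N u * site N pY k * Ut N (-u) with hM
  have hGMG : Gf N * M * Gf N = -M := by
    rw [hM, ← conj_mul (Gf N) (Gf N) Gf_mul_Gf (Ut N u * site N pY k) (Ut N (-u)),
      ← conj_mul (Gf N) (Gf N) Gf_mul_Gf (Ut N u) (site N pY k),
      Gf_conj_Ut, Gf_conj_Ut, Gf_conj_site, XYX, site_neg, mul_neg, neg_mul]
  have key : dotProduct (fun _ : Sp N => cc) (M.mulVec (fun _ => cc))
      = dotProduct (fun _ : Sp N => cc) ((Gf N * M * Gf N).mulVec (fun _ => cc)) := by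
    conv_rhs => rw [← Matrix.mulVec_mulVec, ← Matrix.mulVec_mulVec, Gf_mulVec_cst,
      Matrix.dotProduct_mulVec, Gf_vecMul_cst]
  have hneg : dotProduct (fun _ : Sp N => cc) (M.mulVec (fun _ => cc))
      = -(dotProduct (fun _ : Sp N => cc) (M.mulVec (fun _ => cc))) := by
    conv_lhs => rw [key, hGMG]
    rw [Matrix.neg_mulVec, dotProduct_neg]
  linear_combination hneg / 2

end HelixAux

open HelixAux NormedSpace

/-- self-similarity of the helix decay: for any commensurate `Q`,
`⟨σ^x_n(t)⟩_Q = S_N(t cos Q) cos(Qn)` and `⟨σ^y_n(t)⟩_Q = S_N(t cos Q) sin(Qn)`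
(1-based site `n = j+1` for `j : Fin N`). -/
theorem stmt14 (N : ℕ) [NeZero N] (Q : ℝ)
    (hQ : Complex.exp (Complex.I * Q * N) = 1) (t : ℝ) (n : Fin N) :
    expval N (helix N Q) (Ut N t * site N pX n * Ut N (-t))
      = SN N (t * Real.cos Q) * (Real.cos (Q * ((n : ℕ) + 1)) : ℝ) ∧
    expval N (helix N Q) (Ut N t * site N pY n * Ut N (-t))
      = SN N (t * Real.cos Q) * (Real.sin (Q * ((n : ℕ) + 1)) : ℝ) := by
  have h1 : Complex.exp (Complex.I * Q * (((N:ℕ):ℝ):ℂ)) = 1 := by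
    rw [show ((((N:ℕ):ℝ)):ℂ) = ((N:ℕ):ℂ) by push_cast; ring]
    exact hQ
  rw [exp_IQ] at h1
  have hcs : Real.cos (Q * N) = 1 ∧ Real.sin (Q * N) = 0 := by
    have h2 := congrArg Complex.re h1
    have h3 := congrArg Complex.im h1
    simp only [Complex.add_re, Complex.ofReal_re, Complex.mul_re, Complex.ofReal_im,
      Complex.I_re, Complex.I_im, Complex.one_re, Complex.add_im, Complex.mul_im,
      Complex.one_im, mul_zero, mul_one, zero_mul, sub_zero, add_zero, zero_add] at h2 h3
    exact ⟨by linarith, by linarith⟩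
  have hc := hcs.1
  have hs := hcs.2
  have hc' : Real.cos (-Q * N) = 1 := by rw [neg_mul, Real.cos_neg]; exact hc
  have hs' : Real.sin (-Q * N) = 0 := by rw [neg_mul, Real.sin_neg, hs, neg_zero]
  have hN2' : Real.sin Q ≠ 0 → 1 < N := by
    intro hsin
    rcases Nat.lt_or_ge 1 N with h | h
    · exact h
    · exfalso
      have hN1 : N = 1 := le_antisymm h (Nat.one_le_iff_ne_zero.mpr (NeZero.ne N))
      apply hsin
      have h3 := hs
      rw [hN1] at h3
      simpa using h3
  set u := t * Real.cos Q with hu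
  set K := (Real.cos Q : ℂ) • Hxx N - (Real.sin Q : ℂ) • Jc N with hKdef
  have hK : Wd N (-Q) * Hxx N * Wd N Q = K := by
    have h := Wd_conj_Hxx (N := N) (-Q) hc' hs'
    rw [neg_neg] at h
    rw [h, Real.cos_neg, Real.sin_neg, Complex.ofReal_neg, neg_smul, ← sub_eq_add_neg, hKdef]
  -- right exponential reduction
  have hexpK : ∀ τ : ℝ,
      (exp ((Complex.I * (τ:ℂ)) • K)).mulVec (fun _ : Sp N => ((Real.sqrt 2 : ℂ))⁻¹ ^ N)
      = (exp ((Complex.I * ((τ * Real.cos Q : ℝ):ℂ)) • Hxx N)).mulVec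
          (fun _ : Sp N => ((Real.sqrt 2 : ℂ))⁻¹ ^ N) := by
    intro τ
    have hco : Complex.I * (τ:ℂ) * (Real.cos Q : ℂ)
        = Complex.I * ((τ * Real.cos Q : ℝ):ℂ) := by push_cast; ring
    by_cases hsin : Real.sin Q = 0
    · have hsc : (Complex.I * (τ:ℂ)) • K
          = (Complex.I * ((τ * Real.cos Q : ℝ):ℂ)) • Hxx N := by
        rw [hKdef, hsin, Complex.ofReal_zero, zero_smul, sub_zero, smul_smul, hco]
      rw [hsc]
    · have hN2 := hN2' hsin
      have hsplit : (Complex.I * (τ:ℂ)) • K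
          = (Complex.I * ((τ * Real.cos Q : ℝ):ℂ)) • Hxx N
            + (-(Complex.I * (τ:ℂ) * (Real.sin Q:ℂ))) • Jc N := by
        rw [hKdef, smul_sub, smul_smul, smul_smul, hco, sub_eq_add_neg, ← neg_smul]
      rw [hsplit]
      refine exp_add_kill ((Hxx_Jc_comm.smul_left _).smul_right _) ?_
      rw [Matrix.smul_mulVec, Jc_mulVec_cst hN2, smul_zero]
  -- left exponential reduction
  have hvm : ∀ M : MN N, Matrix.vecMul (fun _ : Sp N => ((Real.sqrt 2 : ℂ))⁻¹ ^ N) (exp M)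
      = (exp Mᵀ).mulVec (fun _ : Sp N => ((Real.sqrt 2 : ℂ))⁻¹ ^ N) := by
    intro M
    rw [Matrix.exp_transpose, Matrix.mulVec_transpose]
  have hexpKL : ∀ τ : ℝ,
      Matrix.vecMul (fun _ : Sp N => ((Real.sqrt 2 : ℂ))⁻¹ ^ N)
        (exp ((Complex.I * (τ:ℂ)) • K))
      = Matrix.vecMul (fun _ : Sp N => ((Real.sqrt 2 : ℂ))⁻¹ ^ N)
          (exp ((Complex.I * ((τ * Real.cos Q : ℝ):ℂ)) • Hxx N)) := by
    intro τ
    have hco : Complex.I * (τ:ℂ) * (Real.cos Q : ℂ)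
        = Complex.I * ((τ * Real.cos Q : ℝ):ℂ) := by push_cast; ring
    rw [hvm, hvm, Matrix.transpose_smul, Matrix.transpose_smul, Hxx_transpose]
    by_cases hsin : Real.sin Q = 0
    · have hKT : Kᵀ = (Real.cos Q : ℂ) • Hxx N := by
        rw [hKdef, Matrix.transpose_sub, Matrix.transpose_smul, Matrix.transpose_smul,
          Hxx_transpose, hsin, Complex.ofReal_zero, zero_smul, sub_zero]
      rw [hKT, smul_smul, hco]
    · have hN2 := hN2' hsin
      have hKT : Kᵀ = (Real.cos Q : ℂ) • Hxx N + (Real.sin Q : ℂ) • Jc N := by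
        rw [hKdef, Matrix.transpose_sub, Matrix.transpose_smul, Matrix.transpose_smul,
          Hxx_transpose, Jc_transpose hN2, smul_neg, sub_neg_eq_add]
      rw [hKT, smul_add, smul_smul, smul_smul, hco]
      refine exp_add_kill ((Hxx_Jc_comm.smul_left _).smul_right _) ?_
      rw [Matrix.smul_mulVec, Jc_mulVec_cst hN2, smul_zero]
  have hER : (exp ((Complex.I * ((-t : ℝ):ℂ)) • K)).mulVec
        (fun _ : Sp N => ((Real.sqrt 2 : ℂ))⁻¹ ^ N)
      = (Ut N (-u)).mulVec (fun _ : Sp N => ((Real.sqrt 2 : ℂ))⁻¹ ^ N) := by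
    rw [hexpK (-t), Ut, show ((-u : ℝ):ℂ) = ((-t * Real.cos Q : ℝ):ℂ) by
      rw [hu]; push_cast; ring]
  have hEL : Matrix.vecMul (fun _ : Sp N => ((Real.sqrt 2 : ℂ))⁻¹ ^ N)
        (exp ((Complex.I * (t:ℂ)) • K))
      = Matrix.vecMul (fun _ : Sp N => ((Real.sqrt 2 : ℂ))⁻¹ ^ N) (Ut N u) := by
    rw [hexpKL t, Ut, show ((u : ℝ):ℂ) = ((t * Real.cos Q : ℝ):ℂ) by rw [hu]]
  -- conjugated Pauli operators
  have hσx : Wd N (-Q) * site N pX n * Wd N Q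
      = (Real.cos (Q * ((n:ℕ)+1)) : ℂ) • site N pX n
        - (Real.sin (Q * ((n:ℕ)+1)) : ℂ) • site N pY n := by
    have h := Wd_conj_siteX (N := N) (-Q) n
    rw [neg_neg, show (-Q) * (((n:ℕ):ℝ)+1) = -(Q * (((n:ℕ):ℝ)+1)) by ring, Real.cos_neg,
      Real.sin_neg, Complex.ofReal_neg, neg_smul, ← sub_eq_add_neg] at h
    exact h
  have hσy : Wd N (-Q) * site N pY n * Wd N Q
      = (Real.cos (Q * ((n:ℕ)+1)) : ℂ) • site N pY n
        + (Real.sin (Q * ((n:ℕ)+1)) : ℂ) • site N pX n := by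
    have h := Wd_conj_siteY (N := N) (-Q) n
    rw [neg_neg, show (-Q) * (((n:ℕ):ℝ)+1) = -(Q * (((n:ℕ):ℝ)+1)) by ring, Real.cos_neg,
      Real.sin_neg, Complex.ofReal_neg, neg_smul, sub_neg_eq_add] at h
    exact h
  -- the sandwich conjugation
  have hmid : ∀ σ : MN N, Wd N (-Q) * (Ut N t * σ * Ut N (-t)) * Wd N Q
      = exp ((Complex.I * (t:ℂ)) • K) * (Wd N (-Q) * σ * Wd N Q)
        * exp ((Complex.I * ((-t:ℝ):ℂ)) • K) := by
    intro σ
    have hWW : Wd N Q * Wd N (-Q) = 1 := Wd_mul_Wd Q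
    rw [← conj_mul (Wd N (-Q)) (Wd N Q) hWW (Ut N t * σ) (Ut N (-t)),
        ← conj_mul (Wd N (-Q)) (Wd N Q) hWW (Ut N t) σ]
    simp only [Ut]
    rw [Wconj_exp' Q, Wconj_exp' Q]
    rw [mul_smul_comm, smul_mul_assoc, hK, mul_smul_comm, smul_mul_assoc, hK]
  have main : ∀ σ : MN N, dotProduct (fun _ : Sp N => ((Real.sqrt 2 : ℂ))⁻¹ ^ N)
      ((exp ((Complex.I * (t:ℂ)) • K) * (Wd N (-Q) * σ * Wd N Q)
        * exp ((Complex.I * ((-t:ℝ):ℂ)) • K)).mulVec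
          (fun _ : Sp N => ((Real.sqrt 2 : ℂ))⁻¹ ^ N))
      = dotProduct (fun _ : Sp N => ((Real.sqrt 2 : ℂ))⁻¹ ^ N)
          ((Ut N u * (Wd N (-Q) * σ * Wd N Q) * Ut N (-u)).mulVec
            (fun _ : Sp N => ((Real.sqrt 2 : ℂ))⁻¹ ^ N)) := by
    intro σ
    simp only [← Matrix.mulVec_mulVec]
    rw [hER]
    simp only [Matrix.dotProduct_mulVec]
    rw [hEL]
  have hX : dotProduct (fun _ : Sp N => ((Real.sqrt 2 : ℂ))⁻¹ ^ N)
      ((Ut N u * site N pX n * Ut N (-u)).mulVec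
        (fun _ : Sp N => ((Real.sqrt 2 : ℂ))⁻¹ ^ N)) = SN N u := by
    have h := expval_translate (N := N) u n
    rw [expval, helix_zero, star_cst] at h
    exact h
  constructor
  · rw [expval_helix Q (Ut N t * site N pX n * Ut N (-t)), helix_zero, star_cst]
    rw [hmid (site N pX n), main (site N pX n), hσx]
    have hdist : Ut N u * ((Real.cos (Q * ((n:ℕ)+1)) : ℂ) • site N pX n
        - (Real.sin (Q * ((n:ℕ)+1)) : ℂ) • site N pY n) * Ut N (-u)
        = (Real.cos (Q * ((n:ℕ)+1)) : ℂ) • (Ut N u * site N pX n * Ut N (-u))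
          - (Real.sin (Q * ((n:ℕ)+1)) : ℂ) • (Ut N u * site N pY n * Ut N (-u)) := by
      rw [mul_sub, sub_mul, mul_smul_comm, mul_smul_comm, smul_mul_assoc, smul_mul_assoc]
    rw [hdist, Matrix.sub_mulVec, Matrix.smul_mulVec, Matrix.smul_mulVec,
      dotProduct_sub, dotProduct_smul, dotProduct_smul]
    rw [expval_Y_zero u n, smul_zero, sub_zero, hX, smul_eq_mul, mul_comm]
  · rw [expval_helix Q (Ut N t * site N pY n * Ut N (-t)), helix_zero, star_cst]
    rw [hmid (site N pY n), main (site N pY n), hσy]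
    have hdist : Ut N u * ((Real.cos (Q * ((n:ℕ)+1)) : ℂ) • site N pY n
        + (Real.sin (Q * ((n:ℕ)+1)) : ℂ) • site N pX n) * Ut N (-u)
        = (Real.cos (Q * ((n:ℕ)+1)) : ℂ) • (Ut N u * site N pY n * Ut N (-u))
          + (Real.sin (Q * ((n:ℕ)+1)) : ℂ) • (Ut N u * site N pX n * Ut N (-u)) := by
      rw [mul_add, add_mul, mul_smul_comm, mul_smul_comm, smul_mul_assoc, smul_mul_assoc]
    rw [hdist, Matrix.add_mulVec, Matrix.smul_mulVec, Matrix.smul_mulVec,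
      dotProduct_add, dotProduct_smul, dotProduct_smul]
    rw [expval_Y_zero u n, smul_zero, zero_add, hX, smul_eq_mul, mul_comm]
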